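/- Let η : (0,∞) → (0,∞) be an increasing homeomorphism and 1 ≤ d ≤ D. There is ε' = ε'(η,d) > 0 such that if Q is a dyadic cube in R^d and f : Q → R^D is η-quasisymmetric with ω_f(Q) < ε', then the infimum defining ω_f(Q) is attained: there exists an affine map A : R^d → R^D with A' ≠ 0 satisfying ω_f(Q)² = ⨍_Q (|f − A| / (|A'| diam Q))². -/

import Mathlib

open MeasureTheory Metric Set

/-- The axis-parallel cube with corner `a` and side length `l`. -/
def cube {d : ℕ} (a : Fin d → ℝ) (l : ℝ) : Set (Fin d → ℝ) :=
  Set.Icc a (fun i => a i + l)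

/-- The dyadic cube with index `p = (n, j)`. -/
def dc {d : ℕ} (p : ℤ × (Fin d → ℤ)) : Set (Fin d → ℝ) :=
  cube (fun i => (2 : ℝ) ^ p.1 * (p.2 i : ℝ)) ((2 : ℝ) ^ p.1)

/-- `f` is `η`-quasisymmetric on `E`. -/
def QSOn {d D : ℕ} (η : ℝ → ℝ) (E : Set (Fin d → ℝ))
    (f : (Fin d → ℝ) → (Fin D → ℝ)) : Prop :=
  ∀ x ∈ E, ∀ y ∈ E, ∀ z ∈ E, x ≠ y → x ≠ z → y ≠ z →
    dist (f x) (f y) ≤ η (dist x y / dist x z) * dist (f x) (f z)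

/-- The normalized affine approximation number `ω_f(Q)`. -/
noncomputable def omegaSet {d D : ℕ} (f : (Fin d → ℝ) → (Fin D → ℝ))
    (Q : Set (Fin d → ℝ)) : ℝ :=
  ⨅ A : {p : ((Fin d → ℝ) →L[ℝ] (Fin D → ℝ)) × (Fin D → ℝ) // p.1 ≠ 0},
    Real.sqrt (⨍ x in Q, ‖f x - (A.val.1 x + A.val.2)‖ ^ 2 / (‖A.val.1‖ * Metric.diam Q) ^ 2)

lemma myIntMul {α : Type*} [MeasurableSpace α] {μ : Measure α} {g h : α → ℝ}
    (hg0 : ∀ x, 0 ≤ g x) (hh0 : ∀ x, 0 ≤ h x)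
    (hgm : AEStronglyMeasurable g μ) (hhm : AEStronglyMeasurable h μ)
    (hgi : Integrable (fun x => g x ^ 2) μ) (hhi : Integrable (fun x => h x ^ 2) μ) :
    Integrable (fun x => g x * h x) μ := by
  refine (hgi.add hhi).mono' (hgm.mul hhm) ?_
  filter_upwards with x
  simp only [Pi.add_apply]
  rw [Real.norm_eq_abs, abs_of_nonneg (mul_nonneg (hg0 x) (hh0 x))]
  nlinarith [hg0 x, hh0 x, sq_nonneg (g x - h x)]

lemma myCS {α : Type*} [MeasurableSpace α] (μ : Measure α) (g h : α → ℝ)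
    (hg0 : ∀ x, 0 ≤ g x) (hh0 : ∀ x, 0 ≤ h x)
    (hgm : AEStronglyMeasurable g μ) (hhm : AEStronglyMeasurable h μ)
    (hgi : Integrable (fun x => g x ^ 2) μ) (hhi : Integrable (fun x => h x ^ 2) μ) :
    ∫ x, g x * h x ∂μ ≤ Real.sqrt (∫ x, g x ^ 2 ∂μ) * Real.sqrt (∫ x, h x ^ 2 ∂μ) := by
  have hghi := myIntMul hg0 hh0 hgm hhm hgi hhi
  set A := ∫ x, g x ^ 2 ∂μ with hA
  set B := ∫ x, h x ^ 2 ∂μ with hB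
  have hA0 : 0 ≤ A := integral_nonneg fun x => sq_nonneg _
  have hB0 : 0 ≤ B := integral_nonneg fun x => sq_nonneg _
  rcases eq_or_lt_of_le hA0 with hAz | hAp
  · have : (fun x => g x ^ 2) =ᵐ[μ] 0 :=
      (integral_eq_zero_iff_of_nonneg_ae (Filter.Eventually.of_forall fun x => sq_nonneg _) hgi).1 hAz.symm
    have hg0' : g =ᵐ[μ] 0 := by
      filter_upwards [this] with x hx
      simpa [pow_eq_zero_iff] using hx
    have : (fun x => g x * h x) =ᵐ[μ] 0 := by
      filter_upwards [hg0'] with x hx; simp [Pi.zero_apply] at hx ⊢; simp [hx]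
    rw [integral_congr_ae this]
    simp only [Pi.zero_apply, integral_zero]
    positivity
  rcases eq_or_lt_of_le hB0 with hBz | hBp
  · have : (fun x => h x ^ 2) =ᵐ[μ] 0 :=
      (integral_eq_zero_iff_of_nonneg_ae (Filter.Eventually.of_forall fun x => sq_nonneg _) hhi).1 hBz.symm
    have hh0' : h =ᵐ[μ] 0 := by
      filter_upwards [this] with x hx
      simpa [pow_eq_zero_iff] using hx
    have : (fun x => g x * h x) =ᵐ[μ] 0 := by
      filter_upwards [hh0'] with x hx; simp [Pi.zero_apply] at hx ⊢; simp [hx]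
    rw [integral_congr_ae this]
    simp only [Pi.zero_apply, integral_zero]
    positivity
  have hsA : 0 < Real.sqrt A := Real.sqrt_pos.2 hAp
  have hsB : 0 < Real.sqrt B := Real.sqrt_pos.2 hBp
  set t : ℝ := Real.sqrt A / Real.sqrt B with ht
  have htp : 0 < t := div_pos hsA hsB
  have hptw : ∀ x, g x * h x ≤ (g x ^ 2 / t + t * h x ^ 2) / 2 := by
    intro x
    have hkey : (g x ^ 2 / t + t * h x ^ 2) / 2 - g x * h x = (g x - t * h x) ^ 2 / t / 2 := by
      field_simp
      ring
    have : 0 ≤ (g x - t * h x) ^ 2 / t / 2 := by positivity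
    linarith [hkey ▸ this]
  have hint2 : Integrable (fun x => (g x ^ 2 / t + t * h x ^ 2) / 2) μ :=
    ((hgi.div_const t).add (hhi.const_mul t)).div_const 2
  have hmono := integral_mono hghi hint2 hptw
  have heval : ∫ x, (g x ^ 2 / t + t * h x ^ 2) / 2 ∂μ = (A / t + t * B) / 2 := by
    rw [integral_div, integral_add (hgi.div_const t) (hhi.const_mul t), integral_div,
      integral_const_mul, hA, hB]
  have halg : (A / t + t * B) / 2 = Real.sqrt A * Real.sqrt B := by
    have hA' : Real.sqrt A * Real.sqrt A = A := Real.mul_self_sqrt hA0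
    have hB' : Real.sqrt B * Real.sqrt B = B := Real.mul_self_sqrt hB0
    rw [ht]
    field_simp
    nlinarith [hA', hB']
  rw [heval, halg] at hmono
  exact hmono

lemma myMink {α : Type*} [MeasurableSpace α] (μ : Measure α) {m : ℕ} (u v : α → (Fin m → ℝ))
    (hum : AEStronglyMeasurable (fun x => ‖u x‖) μ) (hvm : AEStronglyMeasurable (fun x => ‖v x‖) μ)
    (hui : Integrable (fun x => ‖u x‖ ^ 2) μ) (hvi : Integrable (fun x => ‖v x‖ ^ 2) μ) :
    Real.sqrt (∫ x, ‖u x + v x‖ ^ 2 ∂μ) ≤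
      Real.sqrt (∫ x, ‖u x‖ ^ 2 ∂μ) + Real.sqrt (∫ x, ‖v x‖ ^ 2 ∂μ) := by
  set A := ∫ x, ‖u x‖ ^ 2 ∂μ with hA
  set B := ∫ x, ‖v x‖ ^ 2 ∂μ with hB
  have hA0 : 0 ≤ A := integral_nonneg fun x => sq_nonneg _
  have hB0 : 0 ≤ B := integral_nonneg fun x => sq_nonneg _
  have hCS := myCS μ _ _ (fun x => norm_nonneg (u x)) (fun x => norm_nonneg (v x))
    hum hvm hui hvi
  have key : ∫ x, ‖u x + v x‖ ^ 2 ∂μ ≤ A + 2 * (Real.sqrt A * Real.sqrt B) + B := by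
    by_cases hI : Integrable (fun x => ‖u x + v x‖ ^ 2) μ
    · have hIprod := myIntMul (fun x => norm_nonneg (u x)) (fun x => norm_nonneg (v x))
        hum hvm hui hvi
      have hint2 : Integrable (fun x => ‖u x‖ ^ 2 + 2 * (‖u x‖ * ‖v x‖) + ‖v x‖ ^ 2) μ :=
        (hui.add (hIprod.const_mul 2)).add hvi
      have hb : ∀ x, ‖u x + v x‖ ^ 2 ≤ ‖u x‖ ^ 2 + 2 * (‖u x‖ * ‖v x‖) + ‖v x‖ ^ 2 := by
        intro x
        have h1 := norm_add_le (u x) (v x)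
        nlinarith [norm_nonneg (u x), norm_nonneg (v x), norm_nonneg (u x + v x)]
      calc ∫ x, ‖u x + v x‖ ^ 2 ∂μ
          ≤ ∫ x, (‖u x‖ ^ 2 + 2 * (‖u x‖ * ‖v x‖) + ‖v x‖ ^ 2) ∂μ := integral_mono hI hint2 hb
        _ = A + 2 * (∫ x, ‖u x‖ * ‖v x‖ ∂μ) + B := by
            have i1 : Integrable (fun x => ‖u x‖ ^ 2 + 2 * (‖u x‖ * ‖v x‖)) μ :=
              hui.add (hIprod.const_mul 2)
            rw [integral_add i1 hvi, integral_add hui (hIprod.const_mul 2),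
              integral_const_mul, hA, hB]
        _ ≤ A + 2 * (Real.sqrt A * Real.sqrt B) + B := by
            have h2 : (∫ x, ‖u x‖ * ‖v x‖ ∂μ) ≤ Real.sqrt A * Real.sqrt B := hCS
            linarith
    · rw [integral_undef hI]
      positivity
  have hsq : A + 2 * (Real.sqrt A * Real.sqrt B) + B = (Real.sqrt A + Real.sqrt B) ^ 2 := by
    rw [add_sq, Real.sq_sqrt hA0, Real.sq_sqrt hB0]
    ring
  calc Real.sqrt (∫ x, ‖u x + v x‖ ^ 2 ∂μ)
      ≤ Real.sqrt ((Real.sqrt A + Real.sqrt B) ^ 2) := Real.sqrt_le_sqrt (hsq ▸ key)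
    _ = Real.sqrt A + Real.sqrt B := Real.sqrt_sq (by positivity)

lemma cube_compact {d : ℕ} (a : Fin d → ℝ) (ℓ : ℝ) : IsCompact (cube a ℓ) := by
  rw [cube]; exact isCompact_Icc

lemma cube_measurable {d : ℕ} (a : Fin d → ℝ) (ℓ : ℝ) : MeasurableSet (cube a ℓ) := by
  rw [cube]; exact measurableSet_Icc

lemma cube_vol {d : ℕ} (a : Fin d → ℝ) {ℓ : ℝ} (hℓ : 0 ≤ ℓ) :
    (volume (cube a ℓ)).toReal = ℓ ^ d := by
  rw [cube, Real.volume_Icc_pi_toReal (fun i => le_add_of_nonneg_right hℓ)]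
  simp [Finset.prod_const]

lemma cube_vol_pos {d : ℕ} (a : Fin d → ℝ) {ℓ : ℝ} (hℓ : 0 < ℓ) :
    0 < (volume (cube a ℓ)).toReal := by
  rw [cube_vol a hℓ.le]; positivity

lemma cube_diam {d : ℕ} (hd : 1 ≤ d) (a : Fin d → ℝ) {ℓ : ℝ} (hℓ : 0 ≤ ℓ) :
    Metric.diam (cube a ℓ) = ℓ := by
  apply le_antisymm
  · apply Metric.diam_le_of_forall_dist_le hℓ
    intro x hx y hy
    rw [cube, Set.mem_Icc] at hx hy
    rw [dist_pi_le_iff hℓ]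
    intro i
    rw [Real.dist_eq, abs_sub_le_iff]
    constructor
    · have h1 := hx.2 i; have h2 := hy.1 i
      simp only at h1
      linarith
    · have h1 := hy.2 i; have h2 := hx.1 i
      simp only at h1
      linarith
  · have ha : a ∈ cube a ℓ := by
      rw [cube, Set.mem_Icc]
      exact ⟨le_refl _, fun i => le_add_of_nonneg_right hℓ⟩
    have hb : (fun i => a i + ℓ) ∈ cube a ℓ := by
      rw [cube, Set.mem_Icc]
      exact ⟨fun i => le_add_of_nonneg_right hℓ, le_refl _⟩
    have hdist := Metric.dist_le_diam_of_mem (cube_compact a ℓ).isBounded ha hb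
    have : ℓ ≤ dist a (fun i => a i + ℓ) := by
      have h := dist_le_pi_dist a (fun i => a i + ℓ) ⟨0, hd⟩
      rw [Real.dist_eq] at h
      have : |a ⟨0, hd⟩ - (a ⟨0, hd⟩ + ℓ)| = ℓ := by
        rw [abs_sub_comm, add_sub_cancel_left, abs_of_nonneg hℓ]
      linarith [this ▸ h]
    linarith

lemma cube_norm_le {d : ℕ} {a : Fin d → ℝ} {ℓ : ℝ} (hℓ : 0 ≤ ℓ) {x : Fin d → ℝ}
    (hx : x ∈ cube a ℓ) : ‖x‖ ≤ ‖a‖ + ℓ := by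
  rw [cube, Set.mem_Icc] at hx
  refine (pi_norm_le_iff_of_nonneg (by positivity)).2 fun i => ?_
  have h1 := hx.1 i
  have h2 := hx.2 i
  simp only at h2
  have h3 : ‖a i‖ ≤ ‖a‖ := norm_le_pi_norm a i
  rw [Real.norm_eq_abs] at h3 ⊢
  rw [abs_le] at h3 ⊢
  constructor <;> [linarith [h3.1]; linarith [h3.2]]

lemma cube_cont_int {d : ℕ} (a : Fin d → ℝ) (ℓ : ℝ) {g : (Fin d → ℝ) → ℝ} (hg : Continuous g) :
    Integrable g (volume.restrict (cube a ℓ)) :=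
  hg.continuousOn.integrableOn_compact (cube_compact a ℓ)

lemma cube_affine_lower {d D : ℕ} (hd : 1 ≤ d) (hD : 1 ≤ D) (a : Fin d → ℝ) {ℓ : ℝ}
    (hℓ : 0 < ℓ) (L : (Fin d → ℝ) →L[ℝ] (Fin D → ℝ)) (b : Fin D → ℝ) :
    ‖L‖ ^ 2 * ℓ ^ 2 * ℓ ^ d / (12 * (d : ℝ) ^ 2) ≤ ∫ x in cube a ℓ, ‖L x + b‖ ^ 2 := by
  classical
  have hdR : (1 : ℝ) ≤ (d : ℝ) := by exact_mod_cast hd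
  have hLcont : Continuous fun x : Fin d → ℝ => ‖L x + b‖ ^ 2 := by
    exact ((L.continuous.add continuous_const).norm.pow 2)
  have hint : Integrable (fun x => ‖L x + b‖ ^ 2) (volume.restrict (cube a ℓ)) :=
    cube_cont_int a ℓ hLcont
  rcases eq_or_ne L 0 with hL | hL
  · subst hL
    simp only [norm_zero]
    have : (0:ℝ) ^ 2 * ℓ ^ 2 * ℓ ^ d / (12 * (d : ℝ) ^ 2) = 0 := by ring
    rw [this]
    exact integral_nonneg fun x => sq_nonneg _
  haveI : Nonempty (Fin d) := ⟨⟨0, hd⟩⟩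
  haveI : Nonempty (Fin D) := ⟨⟨0, hD⟩⟩
  -- choose i maximizing ‖L (single i 1)‖
  obtain ⟨i, -, hi⟩ := Finset.exists_mem_eq_sup' (Finset.univ_nonempty (α := Fin d))
    (fun k => ‖L (Pi.single k (1:ℝ))‖)
  set w : Fin D → ℝ := L (Pi.single i (1:ℝ)) with hw
  have hLle : ‖L‖ ≤ d * ‖w‖ := by
    apply ContinuousLinearMap.opNorm_le_bound _ (by positivity)
    intro x
    have hx : x = ∑ k, x k • (Pi.single k 1 : Fin d → ℝ) := by
      funext j
      rw [Finset.sum_apply]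
      simp [Pi.single_apply, mul_comm]
    calc ‖L x‖ = ‖∑ k, x k • L (Pi.single k 1 : _)‖ := by
          conv_lhs => rw [hx]
          rw [map_sum]
          simp_rw [_root_.map_smul]
      _ ≤ ∑ k, ‖x k • L (Pi.single k (1:ℝ))‖ := norm_sum_le _ _
      _ ≤ ∑ _k : Fin d, ‖x‖ * ‖w‖ := by
          apply Finset.sum_le_sum
          intro k _
          rw [norm_smul, Real.norm_eq_abs]
          have h1 : |x k| ≤ ‖x‖ := by
            have := norm_le_pi_norm x k; rwa [Real.norm_eq_abs] at this
          have h2 : ‖L (Pi.single k (1:ℝ))‖ ≤ ‖w‖ := by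
            rw [hw, ← hi]
            exact Finset.le_sup' (f := fun k => ‖L (Pi.single k (1:ℝ))‖) (Finset.mem_univ k)
          exact mul_le_mul h1 h2 (norm_nonneg _) (norm_nonneg _)
      _ = d * ‖w‖ * ‖x‖ := by
          rw [Finset.sum_const, Finset.card_univ, Fintype.card_fin, nsmul_eq_mul]
          ring
  -- choose j maximizing |w j|
  obtain ⟨j, -, hj⟩ := Finset.exists_mem_eq_sup' (Finset.univ_nonempty (α := Fin D))
    (fun k => |w k|)
  have hwj : ‖w‖ ≤ |w j| := by
    refine (pi_norm_le_iff_of_nonneg (abs_nonneg _)).2 fun k => ?_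
    rw [Real.norm_eq_abs, ← hj]
    exact Finset.le_sup' (f := fun k => |w k|) (Finset.mem_univ k)
  have hLwj : ‖L‖ ≤ d * |w j| := le_trans hLle (by
    have : (0:ℝ) ≤ d := by positivity
    exact mul_le_mul_of_nonneg_left hwj this)
  -- the affine functional
  set m : ℝ := a i + ℓ / 2 with hm
  set φ : (Fin d → ℝ) → ℝ := fun x => L x j + b j with hφ
  have hφcont : Continuous φ := ((continuous_apply j).comp L.continuous).add continuous_const
  have hφint : Integrable (fun x => φ x ^ 2) (volume.restrict (cube a ℓ)) :=
    cube_cont_int a ℓ (hφcont.pow 2)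
  have hφle : ∀ x, φ x ^ 2 ≤ ‖L x + b‖ ^ 2 := by
    intro x
    have h1 : |φ x| ≤ ‖L x + b‖ := by
      have h2 := norm_le_pi_norm (L x + b) j
      simpa [Real.norm_eq_abs] using h2
    calc φ x ^ 2 = |φ x| ^ 2 := (sq_abs _).symm
      _ ≤ ‖L x + b‖ ^ 2 := by
          apply pow_le_pow_left₀ (abs_nonneg _) h1
  have hstep1 : ∫ x in cube a ℓ, φ x ^ 2 ≤ ∫ x in cube a ℓ, ‖L x + b‖ ^ 2 :=
    integral_mono hφint hint hφle
  -- reflection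
  set ρ : (Fin d → ℝ) → (Fin d → ℝ) := fun x k => if k = i then 2 * m - x k else x k with hρ
  have hρmp : MeasurePreserving ρ volume volume := by
    have hcomp : ∀ k : Fin d,
        MeasurePreserving (fun t : ℝ => if k = i then 2 * m - t else t) volume volume := by
      intro k
      by_cases hk : k = i
      · simp only [hk, if_true]
        have heq : (fun t : ℝ => 2 * m - t) = fun t : ℝ => 2 * m + -t := by
          funext t; ring
        rw [heq]
        exact (Measure.measurePreserving_neg _).add_left _ (2 * m)
      · simp only [hk, if_false]
        exact MeasurePreserving.id _
    exact volume_preserving_pi hcomp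
  have hρinv : ∀ x, ρ (ρ x) = x := by
    intro x; funext k
    by_cases hk : k = i <;> simp [hρ, hk]
  have hρcont : Continuous ρ := by
    apply continuous_pi
    intro k
    by_cases hk : k = i
    · simp only [hρ, hk, if_true]
      exact continuous_const.sub (continuous_apply _)
    · simp only [hρ, hk, if_false]
      exact continuous_apply k
  let ρe : (Fin d → ℝ) ≃ᵐ (Fin d → ℝ) :=
    { toFun := ρ
      invFun := ρ
      left_inv := hρinv
      right_inv := hρinv
      measurable_toFun := hρmp.measurable
      measurable_invFun := hρmp.measurable }
  have hρQ : ρ ⁻¹' (cube a ℓ) = cube a ℓ := by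
    have hone : ∀ x, x ∈ cube a ℓ → ρ x ∈ cube a ℓ := by
      intro x hx
      rw [cube, Set.mem_Icc] at hx ⊢
      refine ⟨fun k => ?_, fun k => ?_⟩
      · by_cases hk : k = i
        · subst hk
          simp only [hρ, if_true]
          have h1 := hx.1 k; have h2 := hx.2 k
          simp only at h2
          simp only [hm]
          linarith
        · simp only [hρ, hk, if_false]
          exact hx.1 k
      · by_cases hk : k = i
        · subst hk
          simp only [hρ, if_true]
          have h1 := hx.1 k; have h2 := hx.2 k
          simp only at h2 ⊢
          simp only [hm]
          linarith
        · simp only [hρ, hk, if_false]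
          exact hx.2 k
    ext x
    simp only [Set.mem_preimage]
    constructor
    · intro h
      have := hone (ρ x) h
      rwa [hρinv x] at this
    · exact hone x
  have hre : ∫ x in cube a ℓ, φ (ρ x) ^ 2 = ∫ x in cube a ℓ, φ x ^ 2 := by
    have h := hρmp.setIntegral_preimage_emb ρe.measurableEmbedding
      (fun x => φ x ^ 2) (cube a ℓ)
    rwa [hρQ] at h
  have hφρ : ∀ x, φ x - φ (ρ x) = w j * (2 * x i - 2 * m) := by
    intro x
    have hρx : ρ x = x + (2 * m - 2 * x i) • (Pi.single i 1 : Fin d → ℝ) := by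
      funext k
      by_cases hk : k = i
      · subst hk
        simp [hρ, Pi.single_apply]
        ring
      · simp [hρ, hk, Pi.single_eq_of_ne hk]
    rw [hφ]
    simp only
    rw [hρx, map_add, _root_.map_smul]
    simp only [Pi.add_apply, Pi.smul_apply, smul_eq_mul, ← hw]
    ring
  have hsq : ∀ x, (φ x - φ (ρ x)) ^ 2 ≤ 2 * φ x ^ 2 + 2 * φ (ρ x) ^ 2 := by
    intro x
    nlinarith [sq_nonneg (φ x + φ (ρ x))]
  have hφρint : Integrable (fun x => φ (ρ x) ^ 2) (volume.restrict (cube a ℓ)) :=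
    cube_cont_int a ℓ (((hφcont.comp hρcont).pow 2))
  have hbase : ∫ x in cube a ℓ, (x i - m) ^ 2 = ℓ ^ 3 / 12 * ℓ ^ (d - 1) := by
    set g : Fin d → ℝ → ℝ := fun k t =>
      (Set.Icc (a k) (a k + ℓ)).indicator (fun t => if k = i then (t - m) ^ 2 else 1) t with hg
    have hind : ∫ x in cube a ℓ, (x i - m) ^ 2 = ∫ x : Fin d → ℝ, ∏ k, g k (x k) := by
      rw [← integral_indicator (cube_measurable a ℓ)]
      congr 1
      funext x
      by_cases hx : x ∈ cube a ℓ
      · rw [Set.indicator_of_mem hx]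
        have hxk : ∀ k, x k ∈ Set.Icc (a k) (a k + ℓ) := by
          rw [cube, Set.mem_Icc] at hx
          exact fun k => ⟨hx.1 k, hx.2 k⟩
        have : ∀ k ∈ Finset.univ, g k (x k) = if k = i then (x k - m) ^ 2 else 1 := by
          intro k _
          rw [hg]
          simp only
          rw [Set.indicator_of_mem (hxk k)]
        rw [Finset.prod_congr rfl this, Finset.prod_ite_eq' Finset.univ i
          (fun k => (x k - m) ^ 2)]
        simp
      · rw [Set.indicator_of_notMem hx]
        have : ¬ ∀ k, x k ∈ Set.Icc (a k) (a k + ℓ) := by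
          intro h
          exact hx (by rw [cube, Set.mem_Icc]; exact ⟨fun k => (h k).1, fun k => (h k).2⟩)
        push_neg at this
        obtain ⟨k, hk⟩ := this
        symm
        apply Finset.prod_eq_zero (Finset.mem_univ k)
        rw [hg]
        simp only
        rw [Set.indicator_of_notMem hk]
    rw [hind, volume_pi, MeasureTheory.integral_fintype_prod_eq_prod g]
    have hgk : ∀ k, (∫ t : ℝ, g k t) = if k = i then ℓ ^ 3 / 12 else ℓ := by
      intro k
      rw [hg]
      simp only
      rw [integral_indicator measurableSet_Icc]
      by_cases hk : k = i
      · subst hk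
        simp only [if_true]
        rw [MeasureTheory.integral_Icc_eq_integral_Ioc,
          ← intervalIntegral.integral_of_le (by linarith : a k ≤ a k + ℓ)]
        rw [intervalIntegral.integral_comp_sub_right (fun u => u ^ 2) m]
        rw [integral_pow]
        have e1 : a k + ℓ - m = ℓ / 2 := by rw [hm]; ring
        have e2 : a k - m = -(ℓ / 2) := by rw [hm]; ring
        rw [e1, e2]
        norm_num
        ring
      · simp only [hk, if_false]
        rw [setIntegral_const]
        rw [measureReal_def, Real.volume_Icc]
        simp only [smul_eq_mul, mul_one, add_sub_cancel_left]
        exact ENNReal.toReal_ofReal hℓ.le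
    rw [Finset.prod_congr rfl (fun k _ => hgk k)]
    rw [← Finset.mul_prod_erase Finset.univ _ (Finset.mem_univ i)]
    simp only [if_true]
    have herase : ∏ k ∈ Finset.univ.erase i, (if k = i then ℓ ^ 3 / 12 else ℓ) = ℓ ^ (d - 1) := by
      rw [Finset.prod_congr rfl (fun k hk => if_neg (Finset.ne_of_mem_erase hk))]
      rw [Finset.prod_const, Finset.card_erase_of_mem (Finset.mem_univ i),
        Finset.card_univ, Fintype.card_fin]
    rw [herase]
  have hlhs : ∫ x in cube a ℓ, (w j * (2 * x i - 2 * m)) ^ 2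
      = 4 * (w j) ^ 2 * (ℓ ^ 3 / 12 * ℓ ^ (d - 1)) := by
    have hptw : (fun x : Fin d → ℝ => (w j * (2 * x i - 2 * m)) ^ 2)
        = fun x => (4 * (w j) ^ 2) * (x i - m) ^ 2 := by
      funext x; ring
    rw [hptw, integral_const_mul, hbase]
  have hmain : ∫ x in cube a ℓ, (w j * (2 * x i - 2 * m)) ^ 2
      ≤ 4 * ∫ x in cube a ℓ, φ x ^ 2 := by
    have h1 : ∫ x in cube a ℓ, (w j * (2 * x i - 2 * m)) ^ 2
        = ∫ x in cube a ℓ, (φ x - φ (ρ x)) ^ 2 := by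
      apply integral_congr_ae
      filter_upwards with x
      rw [hφρ x]
    have hdiffint : Integrable (fun x => (φ x - φ (ρ x)) ^ 2) (volume.restrict (cube a ℓ)) :=
      cube_cont_int a ℓ (((hφcont.sub (hφcont.comp hρcont)).pow 2))
    have hsumint : Integrable (fun x => 2 * φ x ^ 2 + 2 * φ (ρ x) ^ 2)
        (volume.restrict (cube a ℓ)) := (hφint.const_mul 2).add (hφρint.const_mul 2)
    have h2 : ∫ x in cube a ℓ, (φ x - φ (ρ x)) ^ 2
        ≤ ∫ x in cube a ℓ, (2 * φ x ^ 2 + 2 * φ (ρ x) ^ 2) :=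
      integral_mono hdiffint hsumint hsq
    have h3 : ∫ x in cube a ℓ, (2 * φ x ^ 2 + 2 * φ (ρ x) ^ 2)
        = 2 * (∫ x in cube a ℓ, φ x ^ 2) + 2 * (∫ x in cube a ℓ, φ (ρ x) ^ 2) := by
      rw [integral_add (hφint.const_mul 2) (hφρint.const_mul 2), integral_const_mul,
        integral_const_mul]
    rw [h1]
    rw [h3] at h2
    rw [hre] at h2
    linarith
  -- final assembly
  have hφlb : (w j) ^ 2 * (ℓ ^ 3 / 12 * ℓ ^ (d - 1)) ≤ ∫ x in cube a ℓ, φ x ^ 2 := by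
    rw [hlhs] at hmain
    linarith
  have hpow : ℓ ^ 3 / 12 * ℓ ^ (d - 1) = ℓ ^ 2 * ℓ ^ d / 12 := by
    have : ℓ ^ 3 * ℓ ^ (d - 1) = ℓ ^ 2 * ℓ ^ d := by
      rw [← pow_add, ← pow_add]
      congr 1
      omega
    field_simp
    rw [← pow_succ']; congr 1; omega
  have hw2 : ‖L‖ ^ 2 ≤ (d : ℝ) ^ 2 * (w j) ^ 2 := by
    have h1 : ‖L‖ ^ 2 ≤ (d * |w j|) ^ 2 := by
      apply pow_le_pow_left₀ (norm_nonneg _) hLwj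
    calc ‖L‖ ^ 2 ≤ ((d : ℝ) * |w j|) ^ 2 := h1
      _ = (d : ℝ) ^ 2 * (w j) ^ 2 := by rw [mul_pow, sq_abs]
  have hd2 : (0:ℝ) < 12 * (d : ℝ) ^ 2 := by positivity
  rw [div_le_iff₀ hd2] at *
  calc ‖L‖ ^ 2 * ℓ ^ 2 * ℓ ^ d
      ≤ ((d : ℝ) ^ 2 * (w j) ^ 2) * ℓ ^ 2 * ℓ ^ d := by
        have hl2 : (0:ℝ) ≤ ℓ ^ 2 * ℓ ^ d := by positivity
        nlinarith [hw2, hl2]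
    _ = ((w j) ^ 2 * (ℓ ^ 3 / 12 * ℓ ^ (d - 1))) * (12 * (d : ℝ) ^ 2) := by
        rw [hpow]; ring
    _ ≤ (∫ x in cube a ℓ, φ x ^ 2) * (12 * (d : ℝ) ^ 2) := by
        apply mul_le_mul_of_nonneg_right hφlb (le_of_lt hd2)
    _ ≤ (∫ x in cube a ℓ, ‖L x + b‖ ^ 2) * (12 * (d : ℝ) ^ 2) := by
        apply mul_le_mul_of_nonneg_right hstep1 (le_of_lt hd2)

set_option maxHeartbeats 4000000 in
/-- If `f : Q → ℝ^D` is `η`-quasisymmetric on a dyadic cube `Q` and `ω_f(Q) < ε'(η,d)`, then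
the infimum defining `ω_f(Q)` is attained by a nonconstant affine map. -/
theorem omega_inf_attained (d : ℕ) (hd : 1 ≤ d)
    (η : ℝ → ℝ) (hη : StrictMonoOn η (Set.Ioi 0) ∧ Set.BijOn η (Set.Ioi 0) (Set.Ioi 0)) :
    ∃ ε' : ℝ, 0 < ε' ∧
      ∀ (D : ℕ), d ≤ D →
      ∀ (p : ℤ × (Fin d → ℤ)) (f : (Fin d → ℝ) → (Fin D → ℝ)),
        QSOn η (dc p) f → omegaSet f (dc p) < ε' →
        ∃ (L : (Fin d → ℝ) →L[ℝ] (Fin D → ℝ)) (b : Fin D → ℝ), L ≠ 0 ∧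
          omegaSet f (dc p) ^ 2 =
            ⨍ x in dc p, ‖f x - (L x + b)‖ ^ 2 / (‖L‖ * Metric.diam (dc p)) ^ 2 := by
  classical
  have hdR : (1:ℝ) ≤ (d:ℝ) := by exact_mod_cast hd
  have hdpos : (0:ℝ) < (d:ℝ) := lt_of_lt_of_le one_pos hdR
  refine ⟨1 / (4 * (d:ℝ)), by positivity, ?_⟩
  intro D hdD p f _hQS hω
  have hD1 : 1 ≤ D := le_trans hd hdD
  set ℓ : ℝ := (2:ℝ) ^ p.1 with hℓdef
  have hℓ : 0 < ℓ := zpow_pos two_pos _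
  set a : Fin d → ℝ := fun i => (2:ℝ) ^ p.1 * (p.2 i : ℝ) with ha
  have hQeq : dc p = cube a ℓ := rfl
  rw [hQeq] at hω ⊢
  set Q : Set (Fin d → ℝ) := cube a ℓ with hQdef
  set Vr : ℝ := (volume Q).toReal with hVr
  have hVrpos : 0 < Vr := cube_vol_pos a hℓ
  have hdiam : Metric.diam Q = ℓ := cube_diam hd a hℓ.le
  set R : ℝ := ‖a‖ + ℓ with hR
  have hRpos : 0 < R := lt_of_lt_of_le hℓ (le_add_of_nonneg_left (norm_nonneg a))
  set ε : ℝ := 1 / (4 * (d:ℝ)) with hεdef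
  have hεpos : 0 < ε := by positivity
  set F : (((Fin d → ℝ) →L[ℝ] (Fin D → ℝ)) × (Fin D → ℝ)) → ℝ := fun A =>
    ⨍ x in Q, ‖f x - (A.1 x + A.2)‖ ^ 2 / (‖A.1‖ * Metric.diam Q) ^ 2 with hF
  have homega : omegaSet f Q
      = ⨅ A : {q : ((Fin d → ℝ) →L[ℝ] (Fin D → ℝ)) × (Fin D → ℝ) // q.1 ≠ 0},
        Real.sqrt (F A.val) := rfl
  have hbdd : BddBelow (Set.range fun A :
      {q : ((Fin d → ℝ) →L[ℝ] (Fin D → ℝ)) × (Fin D → ℝ) // q.1 ≠ 0} =>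
      Real.sqrt (F A.val)) := ⟨0, by rintro y ⟨A, rfl⟩; exact Real.sqrt_nonneg _⟩
  have hFnonneg : ∀ A, 0 ≤ F A := by
    intro A
    simp only [hF]
    rw [setAverage_eq]
    exact smul_nonneg (by positivity) (integral_nonneg fun x => by positivity)
  set J : (((Fin d → ℝ) →L[ℝ] (Fin D → ℝ)) × (Fin D → ℝ)) → ℝ := fun A =>
    ∫ x in Q, ‖f x - (A.1 x + A.2)‖ ^ 2 with hJ
  have hJnn : ∀ A, 0 ≤ J A := fun A => integral_nonneg fun x => sq_nonneg _
  have hFJ : ∀ A, F A = J A / ((‖A.1‖ * ℓ) ^ 2 * Vr) := by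
    intro A
    simp only [hF, hJ, hdiam]
    rw [setAverage_eq, integral_div, smul_eq_mul, measureReal_def, ← hVr]
    simp only [div_eq_mul_inv, mul_inv]
    ring
  -- the auxiliary nonzero linear map
  set L₁ : (Fin d → ℝ) →L[ℝ] (Fin D → ℝ) :=
    ContinuousLinearMap.pi (fun _ : Fin D => ContinuousLinearMap.proj (⟨0, hd⟩ : Fin d)) with hL₁
  have hL₁ne : L₁ ≠ 0 := by
    intro h
    have h1 : L₁ (fun _ => 1) ⟨0, hD1⟩ = 1 := rfl
    rw [h] at h1
    simp at h1
  haveI hneI : Nonempty {q : ((Fin d → ℝ) →L[ℝ] (Fin D → ℝ)) × (Fin D → ℝ) // q.1 ≠ 0} :=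
    ⟨⟨(L₁, 0), hL₁ne⟩⟩
  by_cases hbad : ∃ (L : (Fin d → ℝ) →L[ℝ] (Fin D → ℝ)) (b : Fin D → ℝ), L ≠ 0 ∧
      ¬ Integrable (fun x => ‖f x - (L x + b)‖ ^ 2) (volume.restrict Q)
  · -- degenerate case : some integrand is not integrable, omega = 0
    obtain ⟨L, b, hL, hni⟩ := hbad
    have hLpos : 0 < ‖L‖ := norm_pos_iff.2 hL
    have hni' : ¬ Integrable
        (fun x => ‖f x - (L x + b)‖ ^ 2 / (‖L‖ * Metric.diam Q) ^ 2) (volume.restrict Q) := by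
      intro hct
      apply hni
      have h2 := hct.mul_const ((‖L‖ * Metric.diam Q) ^ 2)
      have h3 : (fun x => ‖f x - (L x + b)‖ ^ 2 / (‖L‖ * Metric.diam Q) ^ 2
          * (‖L‖ * Metric.diam Q) ^ 2) = fun x => ‖f x - (L x + b)‖ ^ 2 := by
        funext x
        rw [div_mul_cancel₀]
        rw [hdiam]
        positivity
      rwa [h3] at h2
    have hFz : F (L, b) = 0 := by
      simp only [hF]
      rw [setAverage_eq, integral_undef hni', smul_zero]
    have hω0 : omegaSet f Q = 0 := by
      apply le_antisymm
      · rw [homega]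
        have h4 := ciInf_le hbdd (⟨(L, b), hL⟩ :
          {q : ((Fin d → ℝ) →L[ℝ] (Fin D → ℝ)) × (Fin D → ℝ) // q.1 ≠ 0})
        simpa [hFz] using h4
      · rw [homega]
        exact le_ciInf fun A => Real.sqrt_nonneg _
    refine ⟨L, b, hL, ?_⟩
    rw [hω0]
    have : (⨍ x in Q, ‖f x - (L x + b)‖ ^ 2 / (‖L‖ * Metric.diam Q) ^ 2) = F (L, b) := rfl
    rw [this, hFz]
    norm_num
  -- main case
  push_neg at hbad
  have hIntAll : ∀ (L : (Fin d → ℝ) →L[ℝ] (Fin D → ℝ)) (b : Fin D → ℝ),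
      Integrable (fun x => ‖f x - (L x + b)‖ ^ 2) (volume.restrict Q) := by
    intro L b
    rcases eq_or_ne L 0 with hL0 | hL0
    · subst hL0
      have hseq : ∀ n : ℕ,
          Integrable (fun x => ‖f x - ((((n:ℝ)+1)⁻¹ • L₁) x + b)‖ ^ 2) (volume.restrict Q) := by
        intro n
        apply hbad _ b
        apply smul_ne_zero _ hL₁ne
        have : (0:ℝ) < (n:ℝ) + 1 := by positivity
        exact inv_ne_zero (ne_of_gt this)
      have hmeas0 : AEStronglyMeasurable (fun x => ‖f x - ((0 : (Fin d → ℝ) →L[ℝ] (Fin D → ℝ)) x + b)‖ ^ 2)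
          (volume.restrict Q) := by
        apply aestronglyMeasurable_of_tendsto_ae (u := (Filter.atTop : Filter ℕ))
          (f := fun n x => ‖f x - ((((n:ℝ)+1)⁻¹ • L₁) x + b)‖ ^ 2)
          (fun n => (hseq n).aestronglyMeasurable)
        apply Filter.Eventually.of_forall
        intro x
        have h1 : Filter.Tendsto (fun n : ℕ => ((n:ℝ)+1)⁻¹) Filter.atTop (nhds 0) := by
          have := tendsto_one_div_add_atTop_nhds_zero_nat (𝕜 := ℝ)
          simpa [one_div] using this
        have hc : Continuous fun c : ℝ => ‖f x - (c • L₁ x + b)‖ ^ 2 := by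
          apply Continuous.pow
          apply Continuous.norm
          exact continuous_const.sub ((continuous_id.smul continuous_const).add continuous_const)
        have h3 := (hc.tendsto 0).comp h1
        simp only [Function.comp_def, zero_smul] at h3
        simp only [ContinuousLinearMap.smul_apply, ContinuousLinearMap.zero_apply, zero_add]
        convert h3 using 2
        simp
      apply Integrable.mono'
        (g := fun x => 2 * ‖f x - (L₁ x + b)‖ ^ 2 + 2 * ‖L₁ x‖ ^ 2)
      · exact ((hbad L₁ b hL₁ne).const_mul 2).add
          ((cube_cont_int a ℓ ((L₁.continuous.norm.pow 2))).const_mul 2)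
      · exact hmeas0
      · apply Filter.Eventually.of_forall
        intro x
        rw [Real.norm_eq_abs, abs_of_nonneg (sq_nonneg _)]
        have hdec : f x - ((0 : (Fin d → ℝ) →L[ℝ] (Fin D → ℝ)) x + b)
            = (f x - (L₁ x + b)) + L₁ x := by
          simp only [ContinuousLinearMap.zero_apply, zero_add]
          abel
        rw [hdec]
        have h5 := norm_add_le (f x - (L₁ x + b)) (L₁ x)
        nlinarith [h5, sq_nonneg (‖f x - (L₁ x + b)‖ - ‖L₁ x‖),
          norm_nonneg (f x - (L₁ x + b)), norm_nonneg (L₁ x),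
          norm_nonneg ((f x - (L₁ x + b)) + L₁ x)]
    · exact hbad L b hL0
  have hmeasN : ∀ (L : (Fin d → ℝ) →L[ℝ] (Fin D → ℝ)) (b : Fin D → ℝ),
      AEStronglyMeasurable (fun x => ‖f x - (L x + b)‖) (volume.restrict Q) := by
    intro L b
    have h2 := Real.continuous_sqrt.comp_aestronglyMeasurable (hIntAll L b).aestronglyMeasurable
    have h3 : (fun x => Real.sqrt (‖f x - (L x + b)‖ ^ 2)) = fun x => ‖f x - (L x + b)‖ := by
      funext x
      rw [Real.sqrt_sq (norm_nonneg _)]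
    rwa [h3] at h2
  set N : (((Fin d → ℝ) →L[ℝ] (Fin D → ℝ)) × (Fin D → ℝ)) → ℝ := fun A => Real.sqrt (J A)
    with hN
  have hNval : ∀ (L : (Fin d → ℝ) →L[ℝ] (Fin D → ℝ)) (b : Fin D → ℝ),
      N (L, b) = Real.sqrt (∫ x in Q, ‖f x - (L x + b)‖ ^ 2) := fun L b => rfl
  have hNsq : ∀ A, N A ^ 2 = J A := fun A => Real.sq_sqrt (hJnn A)
  have hNnn : ∀ A, 0 ≤ N A := fun A => Real.sqrt_nonneg _
  have haffcont : ∀ (L : (Fin d → ℝ) →L[ℝ] (Fin D → ℝ)) (b : Fin D → ℝ),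
      Continuous fun x : Fin d → ℝ => L x + b := fun L b => L.continuous.add continuous_const
  have haffint : ∀ (L : (Fin d → ℝ) →L[ℝ] (Fin D → ℝ)) (b : Fin D → ℝ),
      Integrable (fun x => ‖L x + b‖ ^ 2) (volume.restrict Q) :=
    fun L b => cube_cont_int a ℓ ((haffcont L b).norm.pow 2)
  have haffmeas : ∀ (L : (Fin d → ℝ) →L[ℝ] (Fin D → ℝ)) (b : Fin D → ℝ),
      AEStronglyMeasurable (fun x => ‖L x + b‖) (volume.restrict Q) :=
    fun L b => (haffcont L b).norm.aestronglyMeasurable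
  have haffup : ∀ (L : (Fin d → ℝ) →L[ℝ] (Fin D → ℝ)) (b : Fin D → ℝ),
      ∫ x in Q, ‖L x + b‖ ^ 2 ≤ (‖L‖ * R + ‖b‖) ^ 2 * Vr := by
    intro L b
    have hb : ∀ x ∈ Q, ‖L x + b‖ ^ 2 ≤ (‖L‖ * R + ‖b‖) ^ 2 := by
      intro x hx
      have h1 : ‖L x + b‖ ≤ ‖L‖ * R + ‖b‖ := by
        have h2 := L.le_opNorm x
        have h3 := cube_norm_le hℓ.le hx
        have h4 := norm_add_le (L x) b
        have h3' : ‖x‖ ≤ R := h3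
        have h5 : ‖L‖ * ‖x‖ ≤ ‖L‖ * R := mul_le_mul_of_nonneg_left h3' (norm_nonneg L)
        linarith
      exact pow_le_pow_left₀ (norm_nonneg _) h1 2
    calc ∫ x in Q, ‖L x + b‖ ^ 2 ≤ ∫ _x in Q, (‖L‖ * R + ‖b‖) ^ 2 := by
          apply setIntegral_mono_on (haffint L b)
            (integrableOn_const (cube_compact a ℓ).measure_lt_top.ne)
            (cube_measurable a ℓ) hb
      _ = (‖L‖ * R + ‖b‖) ^ 2 * Vr := by
          rw [setIntegral_const, smul_eq_mul, measureReal_def, ← hVr, mul_comm]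
  have haffupN : ∀ (L : (Fin d → ℝ) →L[ℝ] (Fin D → ℝ)) (b : Fin D → ℝ),
      Real.sqrt (∫ x in Q, ‖L x + b‖ ^ 2) ≤ (‖L‖ * R + ‖b‖) * Real.sqrt Vr := by
    intro L b
    calc Real.sqrt (∫ x in Q, ‖L x + b‖ ^ 2)
        ≤ Real.sqrt ((‖L‖ * R + ‖b‖) ^ 2 * Vr) := Real.sqrt_le_sqrt (haffup L b)
      _ = (‖L‖ * R + ‖b‖) * Real.sqrt Vr := by
          rw [Real.sqrt_mul (sq_nonneg _), Real.sqrt_sq (by positivity)]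
  have haffκ : ∀ (L : (Fin d → ℝ) →L[ℝ] (Fin D → ℝ)) (b : Fin D → ℝ),
      ‖L‖ ^ 2 * ℓ ^ 2 * Vr / (12 * (d:ℝ) ^ 2) ≤ ∫ x in Q, ‖L x + b‖ ^ 2 := by
    intro L b
    have h1 := cube_affine_lower hd hD1 a hℓ L b
    rw [hVr, cube_vol a hℓ.le]
    exact h1
  have hmink : ∀ (u v : (Fin d → ℝ) → (Fin D → ℝ)),
      AEStronglyMeasurable (fun x => ‖u x‖) (volume.restrict Q) →
      AEStronglyMeasurable (fun x => ‖v x‖) (volume.restrict Q) →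
      Integrable (fun x => ‖u x‖ ^ 2) (volume.restrict Q) →
      Integrable (fun x => ‖v x‖ ^ 2) (volume.restrict Q) →
      Real.sqrt (∫ x in Q, ‖u x + v x‖ ^ 2) ≤
        Real.sqrt (∫ x in Q, ‖u x‖ ^ 2) + Real.sqrt (∫ x in Q, ‖v x‖ ^ 2) :=
    fun u v h1 h2 h3 h4 => myMink (volume.restrict Q) u v h1 h2 h3 h4
  -- triangle inequality for N
  have htri : ∀ A B : (((Fin d → ℝ) →L[ℝ] (Fin D → ℝ)) × (Fin D → ℝ)),
      N B ≤ N A + (‖A.1 - B.1‖ * R + ‖A.2 - B.2‖) * Real.sqrt Vr := by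
    intro A B
    have hdecomp : ∀ x : Fin d → ℝ, f x - (B.1 x + B.2)
        = (f x - (A.1 x + A.2)) + ((A.1 - B.1) x + (A.2 - B.2)) := by
      intro x
      simp only [ContinuousLinearMap.sub_apply]
      abel
    have h1 : N B = Real.sqrt (∫ x in Q,
        ‖(f x - (A.1 x + A.2)) + ((A.1 - B.1) x + (A.2 - B.2))‖ ^ 2) := by
      simp only [hN, hJ]
      congr 1
      apply integral_congr_ae
      filter_upwards with x
      rw [← hdecomp x]
    rw [h1]
    have h2 := hmink (fun x => f x - (A.1 x + A.2)) (fun x => (A.1 - B.1) x + (A.2 - B.2))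
      (hmeasN A.1 A.2) (haffmeas (A.1 - B.1) (A.2 - B.2)) (hIntAll A.1 A.2)
      (haffint (A.1 - B.1) (A.2 - B.2))
    have h3 := haffupN (A.1 - B.1) (A.2 - B.2)
    have h4 : N A = Real.sqrt (∫ x in Q, ‖f x - (A.1 x + A.2)‖ ^ 2) := rfl
    rw [h4]
    linarith
  have hNcont : Continuous N := by
    have hlip : LipschitzWith (Real.toNNReal ((R + 1) * Real.sqrt Vr)) N := by
      apply LipschitzWith.of_dist_le_mul
      intro A B
      have hcoe : ((Real.toNNReal ((R + 1) * Real.sqrt Vr)) : ℝ) = (R + 1) * Real.sqrt Vr :=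
        Real.coe_toNNReal _ (by positivity)
      rw [Real.dist_eq, hcoe, abs_le]
      have h1 := htri A B
      have h2 := htri B A
      have hd1 : ‖A.1 - B.1‖ ≤ dist A B := by
        rw [← dist_eq_norm, Prod.dist_eq]
        exact le_max_left _ _
      have hd2 : ‖A.2 - B.2‖ ≤ dist A B := by
        rw [← dist_eq_norm, Prod.dist_eq]
        exact le_max_right _ _
      have hd1' : ‖B.1 - A.1‖ ≤ dist A B := by rw [norm_sub_rev]; exact hd1
      have hd2' : ‖B.2 - A.2‖ ≤ dist A B := by rw [norm_sub_rev]; exact hd2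
      have hs : 0 ≤ Real.sqrt Vr := Real.sqrt_nonneg _
      have hdn : 0 ≤ dist A B := dist_nonneg
      have key : ∀ (c1 c2 : ℝ), c1 ≤ dist A B → c2 ≤ dist A B → 0 ≤ c1 → 0 ≤ c2 →
          (c1 * R + c2) * Real.sqrt Vr ≤ (R + 1) * Real.sqrt Vr * dist A B := by
        intro c1 c2 k1 k2 n1 n2
        have hk : c1 * R + c2 ≤ (R + 1) * dist A B := by nlinarith
        nlinarith [Real.sqrt_nonneg Vr]
      have k1 := key _ _ hd1 hd2 (norm_nonneg _) (norm_nonneg _)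
      have k2 := key _ _ hd1' hd2' (norm_nonneg _) (norm_nonneg _)
      constructor
      · linarith [h1, k1]
      · linarith [h2, k2]
    exact hlip.continuous
  have hJcont : Continuous J := by
    have h1 : J = fun A => (N A) ^ 2 := by
      funext A
      rw [hNsq]
    rw [h1]
    exact hNcont.pow 2
  -- extract near-minimizer
  rw [homega] at hω
  obtain ⟨A₀, hA₀⟩ := exists_lt_of_ciInf_lt hω
  have hA₀' : Real.sqrt (F A₀.val) < ε := hA₀
  have hFA₀ : F A₀.val < ε ^ 2 := by
    have h1 : F A₀.val = (Real.sqrt (F A₀.val)) ^ 2 := (Real.sq_sqrt (hFnonneg _)).symm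
    rw [h1]
    exact pow_lt_pow_left₀ hA₀' (Real.sqrt_nonneg _) (by norm_num)
  have hNA : ∀ A : (((Fin d → ℝ) →L[ℝ] (Fin D → ℝ)) × (Fin D → ℝ)), A.1 ≠ 0 → F A ≤ ε ^ 2 →
      N A ≤ ε * (‖A.1‖ * ℓ) * Real.sqrt Vr := by
    intro A hA1 hFA
    have hnp : 0 < ‖A.1‖ := norm_pos_iff.2 hA1
    have hC : 0 < (‖A.1‖ * ℓ) ^ 2 * Vr := by positivity
    have hJle : J A ≤ ε ^ 2 * ((‖A.1‖ * ℓ) ^ 2 * Vr) := by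
      have h1 := hFJ A
      rw [h1] at hFA
      exact (div_le_iff₀ hC).1 hFA
    calc N A = Real.sqrt (J A) := rfl
      _ ≤ Real.sqrt (ε ^ 2 * ((‖A.1‖ * ℓ) ^ 2 * Vr)) := Real.sqrt_le_sqrt hJle
      _ = ε * (‖A.1‖ * ℓ) * Real.sqrt Vr := by
          rw [show ε ^ 2 * ((‖A.1‖ * ℓ) ^ 2 * Vr) = (ε * (‖A.1‖ * ℓ)) ^ 2 * Vr by ring]
          rw [Real.sqrt_mul (sq_nonneg _), Real.sqrt_sq (by positivity)]
  -- f is not a.e. constant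
  have hfne : ∀ v : Fin D → ℝ, ¬ (f =ᵐ[volume.restrict Q] fun _ => v) := by
    intro v hv
    have hJeq : J A₀.val = ∫ x in Q, ‖A₀.val.1 x + (A₀.val.2 - v)‖ ^ 2 := by
      rw [hJ]
      apply integral_congr_ae
      filter_upwards [hv] with x hx
      rw [hx]
      rw [show (fun _ : Fin d → ℝ => v) x - (A₀.val.1 x + A₀.val.2)
        = -(A₀.val.1 x + (A₀.val.2 - v)) by abel]
      rw [norm_neg]
    have hκ := haffκ A₀.val.1 (A₀.val.2 - v)
    have hL0 : A₀.val.1 ≠ 0 := A₀.prop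
    have hnp : 0 < ‖A₀.val.1‖ := norm_pos_iff.2 hL0
    have hq : 0 < (‖A₀.val.1‖ * ℓ) ^ 2 * Vr := by positivity
    have hFge : 1 / (12 * (d:ℝ) ^ 2) ≤ F A₀.val := by
      rw [hFJ, hJeq, le_div_iff₀ hq]
      calc 1 / (12 * (d:ℝ) ^ 2) * ((‖A₀.val.1‖ * ℓ) ^ 2 * Vr)
          = ‖A₀.val.1‖ ^ 2 * ℓ ^ 2 * Vr / (12 * (d:ℝ) ^ 2) := by ring
        _ ≤ ∫ x in Q, ‖A₀.val.1 x + (A₀.val.2 - v)‖ ^ 2 := hκ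
    have hε2 : ε ^ 2 = 1 / (16 * (d:ℝ) ^ 2) := by
      rw [hεdef]
      field_simp
      ring
    rw [hε2] at hFA₀
    have hd2 : (0:ℝ) < (d:ℝ) ^ 2 := by positivity
    have hcon : 1 / (16 * (d:ℝ) ^ 2) < 1 / (12 * (d:ℝ) ^ 2) := by
      apply div_lt_div_of_pos_left one_pos (by positivity)
      nlinarith
    linarith
  -- constants: coercivity
  have hconst : ∀ v : Fin D → ℝ, (∫ _x in Q, ‖v‖ ^ 2) = ‖v‖ ^ 2 * Vr := by
    intro v
    rw [setIntegral_const, smul_eq_mul, measureReal_def, ← hVr, mul_comm]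
  set Nf : ℝ := N (0, (0 : Fin D → ℝ)) with hNf
  have hNfnn : 0 ≤ Nf := hNnn _
  have hcoerc : ∀ v : Fin D → ℝ, ‖v‖ * Real.sqrt Vr - Nf ≤ N (0, v) := by
    intro v
    have hmk := hmink (fun x => -(f x - ((0 : (Fin d → ℝ) →L[ℝ] (Fin D → ℝ)) x + v)))
      (fun x => f x - ((0 : (Fin d → ℝ) →L[ℝ] (Fin D → ℝ)) x + (0 : Fin D → ℝ)))
      (by simp only [norm_neg]; exact hmeasN 0 v)
      (hmeasN 0 0)
      (by simp only [norm_neg]; exact hIntAll 0 v)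
      (hIntAll 0 0)
    simp only [norm_neg] at hmk
    have hLHS : (fun x : Fin d → ℝ =>
        ‖-(f x - ((0 : (Fin d → ℝ) →L[ℝ] (Fin D → ℝ)) x + v))
          + (f x - ((0 : (Fin d → ℝ) →L[ℝ] (Fin D → ℝ)) x + (0 : Fin D → ℝ)))‖ ^ 2)
        = fun _ => ‖v‖ ^ 2 := by
      funext x
      congr 1
      rw [show -(f x - ((0 : (Fin d → ℝ) →L[ℝ] (Fin D → ℝ)) x + v))
          + (f x - ((0 : (Fin d → ℝ) →L[ℝ] (Fin D → ℝ)) x + (0 : Fin D → ℝ))) = v by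
        simp only [ContinuousLinearMap.zero_apply, zero_add]; abel]
    rw [show (∫ x in Q, ‖-(f x - ((0 : (Fin d → ℝ) →L[ℝ] (Fin D → ℝ)) x + v))
        + (f x - ((0 : (Fin d → ℝ) →L[ℝ] (Fin D → ℝ)) x + (0 : Fin D → ℝ)))‖ ^ 2)
        = ∫ _x in Q, ‖v‖ ^ 2 by rw [hLHS]] at hmk
    rw [hconst v] at hmk
    rw [show Real.sqrt (‖v‖ ^ 2 * Vr) = ‖v‖ * Real.sqrt Vr by
      rw [Real.sqrt_mul (sq_nonneg _), Real.sqrt_sq (norm_nonneg _)]] at hmk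
    have e1 : Real.sqrt (∫ x in Q,
        ‖f x - ((0 : (Fin d → ℝ) →L[ℝ] (Fin D → ℝ)) x + v)‖ ^ 2) = N (0, v) := rfl
    have e2 : Real.sqrt (∫ x in Q,
        ‖f x - ((0 : (Fin d → ℝ) →L[ℝ] (Fin D → ℝ)) x + (0 : Fin D → ℝ))‖ ^ 2) = Nf := rfl
    rw [e1, e2] at hmk
    linarith
  -- distance to constants
  obtain ⟨δs, hδpos, hδ⟩ : ∃ δs : ℝ, 0 < δs ∧ ∀ v : Fin D → ℝ, δs ≤ J (0, v) := by
    set Φ : (Fin D → ℝ) → ℝ := fun v => J (0, v) with hΦ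
    have hΦcont : Continuous Φ := hJcont.comp (continuous_const.prodMk continuous_id)
    have hΦnn : ∀ v, 0 ≤ Φ v := fun v => hJnn _
    have hrad : (0:ℝ) ≤ (2 * Nf + 1) / Real.sqrt Vr := by positivity
    obtain ⟨v₀, hv₀mem, hv₀min⟩ :=
      (isCompact_closedBall (0 : Fin D → ℝ) ((2 * Nf + 1) / Real.sqrt Vr)).exists_isMinOn
      ⟨0, Metric.mem_closedBall_self hrad⟩ hΦcont.continuousOn
    have hglobal : ∀ v, Φ v₀ ≤ Φ v := by
      intro v
      by_cases hvb : v ∈ Metric.closedBall (0 : Fin D → ℝ) ((2 * Nf + 1) / Real.sqrt Vr)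
      · exact hv₀min hvb
      · have hvnorm : (2 * Nf + 1) / Real.sqrt Vr < ‖v‖ := by
          rw [Metric.mem_closedBall, dist_zero_right] at hvb
          linarith [not_le.1 hvb]
        have hsv : 0 < Real.sqrt Vr := Real.sqrt_pos.2 hVrpos
        have h1 : 2 * Nf + 1 ≤ ‖v‖ * Real.sqrt Vr := by
          rw [div_lt_iff₀ hsv] at hvnorm
          linarith
        have h2 : Nf + 1 ≤ N (0, v) := by
          have := hcoerc v
          linarith
        have h3 : Φ v₀ ≤ Φ 0 := hv₀min (Metric.mem_closedBall_self hrad)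
        have h4 : Φ 0 = Nf ^ 2 := by
          simp only [hΦ]
          rw [← hNsq ((0 : (Fin d → ℝ) →L[ℝ] (Fin D → ℝ)), (0 : Fin D → ℝ))]
        have h5 : N ((0 : (Fin d → ℝ) →L[ℝ] (Fin D → ℝ)), v) ^ 2 = Φ v :=
          hNsq ((0 : (Fin d → ℝ) →L[ℝ] (Fin D → ℝ)), v)
        have h6 : Nf ^ 2 ≤ (Nf + 1) ^ 2 :=
          pow_le_pow_left₀ hNfnn (by linarith) 2
        have h7 : (Nf + 1) ^ 2 ≤ N ((0 : (Fin d → ℝ) →L[ℝ] (Fin D → ℝ)), v) ^ 2 :=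
          pow_le_pow_left₀ (by linarith [hNfnn]) h2 2
        rw [h5] at h7
        linarith [h3, h4 ▸ h3]
    have hΦv₀pos : 0 < Φ v₀ := by
      rcases lt_or_eq_of_le (hΦnn v₀) with h | h
      · exact h
      · exfalso
        apply hfne v₀
        have hz : (∫ x in Q, ‖f x - ((0 : (Fin d → ℝ) →L[ℝ] (Fin D → ℝ)) x + v₀)‖ ^ 2) = 0 :=
          h.symm
        have h8 := (integral_eq_zero_iff_of_nonneg_ae
          (Filter.Eventually.of_forall fun x => sq_nonneg _) (hIntAll 0 v₀)).1 hz
        filter_upwards [h8] with x hx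
        simp only [Pi.zero_apply] at hx
        have h9 : ‖f x - ((0 : (Fin d → ℝ) →L[ℝ] (Fin D → ℝ)) x + v₀)‖ = 0 :=
          sq_eq_zero_iff.1 hx
        rw [norm_eq_zero, sub_eq_zero] at h9
        simpa using h9
    exact ⟨Φ v₀, hΦv₀pos, fun v => hglobal v⟩
  -- good region bounds
  set M : ℝ := 26 * (d:ℝ) * Nf / (ℓ * Real.sqrt Vr) with hM
  set mm : ℝ := Real.sqrt δs / (Real.sqrt Vr * (ε * ℓ + R)) with hmm
  have hsv : 0 < Real.sqrt Vr := Real.sqrt_pos.2 hVrpos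
  have hmmpos : 0 < mm := by
    rw [hmm]
    apply div_pos (Real.sqrt_pos.2 hδpos)
    positivity
  set Bb : ℝ := (ε * M * ℓ * Real.sqrt Vr + Nf + M * R * Real.sqrt Vr) / Real.sqrt Vr with hBb
  have hgood : ∀ A : (((Fin d → ℝ) →L[ℝ] (Fin D → ℝ)) × (Fin D → ℝ)), A.1 ≠ 0 → F A ≤ ε ^ 2 →
      mm ≤ ‖A.1‖ ∧ ‖A.1‖ ≤ M ∧ ‖A.2‖ ≤ Bb := by
    intro A hA1 hFA
    have hnp : 0 < ‖A.1‖ := norm_pos_iff.2 hA1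
    have hNAle := hNA A hA1 hFA
    -- upper bound on ‖A.1‖
    have hMbound : ‖A.1‖ ≤ M := by
      have hP := haffκ A.1 A.2
      have hPsq : Real.sqrt (∫ x in Q, ‖A.1 x + A.2‖ ^ 2) ^ 2 = ∫ x in Q, ‖A.1 x + A.2‖ ^ 2 :=
        Real.sq_sqrt (integral_nonneg fun x => sq_nonneg _)
      have htriP : Real.sqrt (∫ x in Q, ‖A.1 x + A.2‖ ^ 2) ≤ N A + Nf := by
        have hmk := hmink (fun x => -(f x - (A.1 x + A.2)))
          (fun x => f x - ((0 : (Fin d → ℝ) →L[ℝ] (Fin D → ℝ)) x + (0 : Fin D → ℝ)))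
          (by simp only [norm_neg]; exact hmeasN A.1 A.2)
          (hmeasN 0 0)
          (by simp only [norm_neg]; exact hIntAll A.1 A.2)
          (hIntAll 0 0)
        simp only [norm_neg] at hmk
        have hLHS : (fun x : Fin d → ℝ => ‖-(f x - (A.1 x + A.2))
            + (f x - ((0 : (Fin d → ℝ) →L[ℝ] (Fin D → ℝ)) x + (0 : Fin D → ℝ)))‖ ^ 2)
            = fun x => ‖A.1 x + A.2‖ ^ 2 := by
          funext x
          congr 1
          rw [show -(f x - (A.1 x + A.2))
              + (f x - ((0 : (Fin d → ℝ) →L[ℝ] (Fin D → ℝ)) x + (0 : Fin D → ℝ)))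
              = A.1 x + A.2 by simp only [ContinuousLinearMap.zero_apply, zero_add]; abel]
        rw [show (∫ x in Q, ‖-(f x - (A.1 x + A.2))
            + (f x - ((0 : (Fin d → ℝ) →L[ℝ] (Fin D → ℝ)) x + (0 : Fin D → ℝ)))‖ ^ 2)
            = ∫ x in Q, ‖A.1 x + A.2‖ ^ 2 by rw [hLHS]] at hmk
        have e1 : Real.sqrt (∫ x in Q, ‖f x - (A.1 x + A.2)‖ ^ 2) = N A := by
          rw [hN, hJ]
        have e2 : Real.sqrt (∫ x in Q,
            ‖f x - ((0 : (Fin d → ℝ) →L[ℝ] (Fin D → ℝ)) x + (0 : Fin D → ℝ))‖ ^ 2) = Nf := rfl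
        rw [e1, e2] at hmk
        exact hmk
      set t : ℝ := ‖A.1‖ * ℓ * Real.sqrt Vr with hts
      have htnn : 0 < t := by positivity
      have hchain : t ^ 2 / (12 * (d:ℝ) ^ 2) ≤ (ε * t + Nf) ^ 2 := by
        have h1 : Real.sqrt (∫ x in Q, ‖A.1 x + A.2‖ ^ 2) ≤ ε * t + Nf := by
          have : ε * (‖A.1‖ * ℓ) * Real.sqrt Vr = ε * t := by rw [hts]; ring
          calc Real.sqrt (∫ x in Q, ‖A.1 x + A.2‖ ^ 2) ≤ N A + Nf := htriP
            _ ≤ ε * (‖A.1‖ * ℓ) * Real.sqrt Vr + Nf := by linarith [hNAle]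
            _ = ε * t + Nf := by rw [this]
        have h2 : (∫ x in Q, ‖A.1 x + A.2‖ ^ 2) ≤ (ε * t + Nf) ^ 2 := by
          rw [← hPsq]
          apply pow_le_pow_left₀ (Real.sqrt_nonneg _) h1
        have h3 : t ^ 2 / (12 * (d:ℝ) ^ 2) = ‖A.1‖ ^ 2 * ℓ ^ 2 * Vr / (12 * (d:ℝ) ^ 2) := by
          rw [hts]
          rw [mul_pow, mul_pow, Real.sq_sqrt hVrpos.le]
        rw [h3]
        exact le_trans hP h2
      have ht26 : t ≤ 26 * (d:ℝ) * Nf := by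
        by_contra hcon
        push_neg at hcon
        have hεt : ε * t = t / (4 * (d:ℝ)) := by rw [hεdef]; ring
        rw [hεt] at hchain
        have h12 : (0:ℝ) < 12 * (d:ℝ) ^ 2 := by positivity
        rw [div_le_iff₀ h12] at hchain
        have hdne : (d:ℝ) ≠ 0 := ne_of_gt hdpos
        have he : (t / (4 * (d:ℝ)) + Nf) ^ 2 * (12 * (d:ℝ) ^ 2)
            = 3 / 4 * (t * t) + 6 * ((d:ℝ) * Nf * t) + 12 * ((d:ℝ) * Nf * ((d:ℝ) * Nf)) := by
          field_simp
          ring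
        rw [he] at hchain
        have ht2 : t ^ 2 = t * t := sq t
        rw [ht2] at hchain
        have e1 : 26 * (d:ℝ) * Nf * t = 26 * ((d:ℝ) * Nf * t) := by ring
        have hp1 : 26 * ((d:ℝ) * Nf * t) < t * t := by
          have hmul := mul_lt_mul_of_pos_right hcon htnn
          linarith [e1]
        have e2 : (d:ℝ) * Nf * (26 * (d:ℝ) * Nf) = 26 * ((d:ℝ) * Nf * ((d:ℝ) * Nf)) := by ring
        have hp2 : 26 * ((d:ℝ) * Nf * ((d:ℝ) * Nf)) ≤ (d:ℝ) * Nf * t := by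
          have hmul := mul_le_mul_of_nonneg_left hcon.le (mul_nonneg hdpos.le hNfnn)
          linarith [e2]
        have hp3 : 0 ≤ (d:ℝ) * Nf * ((d:ℝ) * Nf) :=
          mul_nonneg (mul_nonneg hdpos.le hNfnn) (mul_nonneg hdpos.le hNfnn)
        linarith [hchain, hp1, hp2, hp3]
      rw [hM]
      rw [hts] at ht26
      rw [le_div_iff₀ (by positivity : (0:ℝ) < ℓ * Real.sqrt Vr)]
      have hre : ‖A.1‖ * (ℓ * Real.sqrt Vr) = ‖A.1‖ * ℓ * Real.sqrt Vr := by ring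
      linarith [ht26, hre]
    refine ⟨?_, hMbound, ?_⟩
    · -- lower bound
      have h1 : Real.sqrt δs ≤ N (0, A.2) := by
        have h2 := hδ A.2
        have h3 : Real.sqrt δs ≤ Real.sqrt (J (0, A.2)) := Real.sqrt_le_sqrt h2
        exact h3
      have h4 := htri A (0, A.2)
      simp only [sub_zero, sub_self, norm_zero, add_zero] at h4
      have h5 : Real.sqrt δs ≤ N A + ‖A.1‖ * R * Real.sqrt Vr := by
        calc Real.sqrt δs ≤ N (0, A.2) := h1
          _ ≤ N A + ‖A.1‖ * R * Real.sqrt Vr := by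
            have := h4
            nlinarith [this]
      have h6 : Real.sqrt δs ≤ ‖A.1‖ * (Real.sqrt Vr * (ε * ℓ + R)) := by
        calc Real.sqrt δs ≤ N A + ‖A.1‖ * R * Real.sqrt Vr := h5
          _ ≤ ε * (‖A.1‖ * ℓ) * Real.sqrt Vr + ‖A.1‖ * R * Real.sqrt Vr := by linarith [hNAle]
          _ = ‖A.1‖ * (Real.sqrt Vr * (ε * ℓ + R)) := by ring
      rw [hmm, div_le_iff₀ (by positivity : (0:ℝ) < Real.sqrt Vr * (ε * ℓ + R))]
      exact h6
    · -- bound on ‖A.2‖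
      have h1 : ‖A.2‖ * Real.sqrt Vr - Nf ≤ N (0, A.2) := hcoerc A.2
      have h4 := htri A (0, A.2)
      simp only [sub_zero, sub_self, norm_zero, add_zero] at h4
      have h5 : N (0, A.2) ≤ N A + ‖A.1‖ * R * Real.sqrt Vr := by
        have hre : (‖A.1‖ * R) * Real.sqrt Vr = ‖A.1‖ * R * Real.sqrt Vr := by ring
        linarith [h4, hre]
      have h6 : N A ≤ ε * M * ℓ * Real.sqrt Vr := by
        calc N A ≤ ε * (‖A.1‖ * ℓ) * Real.sqrt Vr := hNAle
          _ = (ε * ℓ * Real.sqrt Vr) * ‖A.1‖ := by ring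
          _ ≤ (ε * ℓ * Real.sqrt Vr) * M := mul_le_mul_of_nonneg_left hMbound
              (mul_nonneg (mul_nonneg hεpos.le hℓ.le) hsv.le)
          _ = ε * M * ℓ * Real.sqrt Vr := by ring
      have h7 : ‖A.1‖ * R * Real.sqrt Vr ≤ M * R * Real.sqrt Vr := by
        calc ‖A.1‖ * R * Real.sqrt Vr = (R * Real.sqrt Vr) * ‖A.1‖ := by ring
          _ ≤ (R * Real.sqrt Vr) * M := mul_le_mul_of_nonneg_left hMbound
              (mul_nonneg hRpos.le hsv.le)
          _ = M * R * Real.sqrt Vr := by ring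
      have h8 : ‖A.2‖ * Real.sqrt Vr ≤ ε * M * ℓ * Real.sqrt Vr + Nf + M * R * Real.sqrt Vr := by
        linarith
      rw [hBb, le_div_iff₀ hsv]
      linarith
  -- compact set and minimizer
  set K : Set ((((Fin d → ℝ) →L[ℝ] (Fin D → ℝ)) × (Fin D → ℝ))) :=
    {A | mm ≤ ‖A.1‖ ∧ ‖A.1‖ ≤ M ∧ ‖A.2‖ ≤ Bb} with hK
  have hKclosed : IsClosed K := by
    have h1 : IsClosed {A : (((Fin d → ℝ) →L[ℝ] (Fin D → ℝ)) × (Fin D → ℝ)) | mm ≤ ‖A.1‖} :=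
      isClosed_le continuous_const continuous_fst.norm
    have h2 : IsClosed {A : (((Fin d → ℝ) →L[ℝ] (Fin D → ℝ)) × (Fin D → ℝ)) | ‖A.1‖ ≤ M} :=
      isClosed_le continuous_fst.norm continuous_const
    have h3 : IsClosed {A : (((Fin d → ℝ) →L[ℝ] (Fin D → ℝ)) × (Fin D → ℝ)) | ‖A.2‖ ≤ Bb} :=
      isClosed_le continuous_snd.norm continuous_const
    have h4 : K = {A : (((Fin d → ℝ) →L[ℝ] (Fin D → ℝ)) × (Fin D → ℝ)) | mm ≤ ‖A.1‖}
        ∩ ({A | ‖A.1‖ ≤ M} ∩ {A | ‖A.2‖ ≤ Bb}) := rfl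
    rw [h4]
    exact h1.inter (h2.inter h3)
  have hKbdd : Bornology.IsBounded K := by
    apply Bornology.IsBounded.subset
      (Metric.isBounded_closedBall (x := (0 : (((Fin d → ℝ) →L[ℝ] (Fin D → ℝ)) × (Fin D → ℝ))))
      (r := max M Bb))
    intro A hA
    rw [Metric.mem_closedBall, dist_zero_right, Prod.norm_def]
    exact max_le_max hA.2.1 hA.2.2
  have hKcomp : IsCompact K := Metric.isCompact_of_isClosed_isBounded hKclosed hKbdd
  have hA₀K : A₀.val ∈ K := hgood A₀.val A₀.prop (le_of_lt hFA₀)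
  set Fc : (((Fin d → ℝ) →L[ℝ] (Fin D → ℝ)) × (Fin D → ℝ)) → ℝ :=
    fun A => J A / ((‖A.1‖ * ℓ) ^ 2 * Vr) with hFc
  have hFcK : ContinuousOn Fc K := by
    apply ContinuousOn.div hJcont.continuousOn
    · exact (((continuous_fst.norm.mul continuous_const).pow 2).mul continuous_const).continuousOn
    · intro A hA
      have h1 : 0 < ‖A.1‖ := lt_of_lt_of_le hmmpos hA.1
      positivity
  obtain ⟨As, hAsK, hAsmin⟩ := hKcomp.exists_isMinOn ⟨A₀.val, hA₀K⟩ hFcK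
  have hAs1 : As.1 ≠ 0 := by
    have h1 : 0 < ‖As.1‖ := lt_of_lt_of_le hmmpos hAsK.1
    exact norm_pos_iff.1 h1
  refine ⟨As.1, As.2, hAs1, ?_⟩
  have hFAs_le : ∀ A : {q : ((Fin d → ℝ) →L[ℝ] (Fin D → ℝ)) × (Fin D → ℝ) // q.1 ≠ 0},
      F As ≤ F A.val := by
    intro A
    by_cases hc : F A.val ≤ ε ^ 2
    · have hAK : A.val ∈ K := hgood A.val A.prop hc
      rw [hFJ As, hFJ A.val]
      exact isMinOn_iff.1 hAsmin _ hAK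
    · push_neg at hc
      have h1 : F As ≤ F A₀.val := by
        rw [hFJ As, hFJ A₀.val]
        exact isMinOn_iff.1 hAsmin _ hA₀K
      linarith
  have homega2 : omegaSet f Q = Real.sqrt (F As) := by
    apply le_antisymm
    · rw [homega]
      have h1 := ciInf_le hbdd (⟨As, hAs1⟩ :
        {q : ((Fin d → ℝ) →L[ℝ] (Fin D → ℝ)) × (Fin D → ℝ) // q.1 ≠ 0})
      exact h1
    · rw [homega]
      exact le_ciInf fun A => Real.sqrt_le_sqrt (hFAs_le A)
  rw [homega2, Real.sq_sqrt (hFnonneg As)]
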